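/- arXiv:2503.12364 — 3 statements merged into one kernel-verified Lean document; each statement's English description precedes it below -/
import Mathlib

section
/- Let (x,y,a,b) with ax+by ≠ 1, and suppose infinitesimal displacements (dx,dy) and (da,db) satisfy the dancing conditions: (dx,dy) is proportional to (x − db/(a db − b da), y − da/(b da − a db)) and (da,db) is proportional to (a − dy/(x dy − y dx), b − dx/(y dx − x dy)). Then da·((1−by)dx + bx dy) + db·(ay dx + (1−ax)dy) = 0; i.e. dancing pairs are null directions of the quadratic form g₀ = da((1−by)dx + bx dy) + db(ay dx + (1−ax)dy). Moreover, each of the two dancing conditions implies the other. -/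
lemma dancing_aux (x y a b dx dy da db : ℝ)
    (h₁ : x*dy - y*dx ≠ 0) (h₂ : a*db - b*da ≠ 0) (hK : a*x + b*y - 1 ≠ 0)
    (l : ℝ) (hl : l ≠ 0)
    (hdx : dx = l * (x - db/(a*db - b*da)))
    (hdy : dy = l * (y - da/(b*da - a*db))) :
    ∃ m : ℝ, m ≠ 0 ∧ da = m * (a - dy/(x*dy - y*dx))
      ∧ db = m * (b - dx/(y*dx - x*dy)) := by
  have h₂' : b*da - a*db ≠ 0 := fun h => h₂ (by linarith)
  have e1 : (a*db - b*da)*dx = l*(x*(a*db - b*da) - db) := by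
    rw [hdx]; field_simp
  have e2 : (a*db - b*da)*dy = l*(y*(a*db - b*da) + da) := by
    rw [hdy]; field_simp; ring
  have hδΔ : (x*dy - y*dx)*(a*db - b*da) = l*(x*da + y*db) := by
    linear_combination x*e2 - y*e1
  have hS : x*da + y*db ≠ 0 := by
    intro h
    exact mul_ne_zero h₁ h₂ (by rw [hδΔ, h, mul_zero])
  refine ⟨(x*da + y*db)/(a*x + b*y - 1), div_ne_zero hS hK, ?_, ?_⟩
  · have key : (a*db - b*da) * (da*((a*x+b*y-1)*(x*dy - y*dx))) =
        (a*db - b*da) * ((x*da + y*db)*(a*(x*dy - y*dx) - dy)) := by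
      linear_combination (da*(a*x+b*y-1)*x - (x*da+y*db)*a*x + (x*da+y*db))*e2
        + ((x*da+y*db)*a*y - da*(a*x+b*y-1)*y)*e1
    have key1 := mul_left_cancel₀ h₂ key
    have h₁' : y*dx - x*dy ≠ 0 := fun h => h₁ (by linarith)
    rw [div_mul_eq_mul_div, eq_div_iff hK, sub_div' h₁, mul_div_assoc', eq_div_iff h₁]
    linear_combination key1
  · have key : (a*db - b*da) * (db*((a*x+b*y-1)*(x*dy - y*dx))) =
        (a*db - b*da) * ((x*da + y*db)*(b*(x*dy - y*dx) + dx)) := by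
      linear_combination (db*(a*x+b*y-1)*x - (x*da+y*db)*b*x)*e2
        + ((x*da+y*db)*b*y - db*(a*x+b*y-1)*y - (x*da+y*db))*e1
    have key2 := mul_left_cancel₀ h₂ key
    have h₁' : y*dx - x*dy ≠ 0 := fun h => h₁ (by linarith)
    rw [div_mul_eq_mul_div, eq_div_iff hK, sub_div' h₁', mul_div_assoc', eq_div_iff h₁']
    linear_combination -key2

theorem dancing_pairs_are_null (x y a b dx dy da db : ℝ)
    (h₁ : x*dy - y*dx ≠ 0) (h₂ : a*db - b*da ≠ 0) (h₃ : a*x + b*y ≠ 1) :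
    let C₁ : Prop := ∃ l : ℝ, l ≠ 0 ∧
      (dx, dy) = (l * (x - db/(a*db - b*da)), l * (y - da/(b*da - a*db)))
    let C₂ : Prop := ∃ m : ℝ, m ≠ 0 ∧
      (da, db) = (m * (a - dy/(x*dy - y*dx)), m * (b - dx/(y*dx - x*dy)))
    (C₁ ↔ C₂)
    ∧ (C₁ → da*((1 - b*y)*dx + b*x*dy) + db*(a*y*dx + (1 - a*x)*dy) = 0) := by
  intro C₁ C₂
  have hK : a*x + b*y - 1 ≠ 0 := sub_ne_zero.mpr h₃
  have hK' : x*a + y*b - 1 ≠ 0 := fun h => hK (by linarith)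
  constructor
  · constructor
    · rintro ⟨l, hl, hp⟩
      rw [Prod.mk.injEq] at hp
      obtain ⟨m, hm, hma, hmb⟩ := dancing_aux x y a b dx dy da db h₁ h₂ hK l hl hp.1 hp.2
      exact ⟨m, hm, by rw [Prod.mk.injEq]; exact ⟨hma, hmb⟩⟩
    · rintro ⟨m, hm, hp⟩
      rw [Prod.mk.injEq] at hp
      obtain ⟨l, hl, hla, hlb⟩ := dancing_aux a b x y da db dx dy h₂ h₁ hK' m hm hp.1 hp.2
      exact ⟨l, hl, by rw [Prod.mk.injEq]; exact ⟨hla, hlb⟩⟩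
  · rintro ⟨l, hl, hp⟩
    rw [Prod.mk.injEq] at hp
    have h₂' : b*da - a*db ≠ 0 := fun h => h₂ (by linarith)
    have e1 : (a*db - b*da)*dx = l*(x*(a*db - b*da) - db) := by
      rw [hp.1]; field_simp
    have e2 : (a*db - b*da)*dy = l*(y*(a*db - b*da) + da) := by
      rw [hp.2]; field_simp; ring
    have hN : (a*db - b*da) * (da*((1 - b*y)*dx + b*x*dy) + db*(a*y*dx + (1 - a*x)*dy))
        = (a*db - b*da) * 0 := by
      linear_combination (da*(1-b*y)+db*a*y)*e1 + (da*b*x+db*(1-a*x))*e2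
    exact mul_left_cancel₀ h₂ hN
end

section
/- The function V(x,y,a,b) = −log(ax+by−1), defined where ax+by > 1, is a para-Kähler potential for the dancing metric: its mixed second partial derivatives satisfy 2(V_{ax} dx + V_{ay} dy)da + 2(V_{bx} dx + V_{by} dy)db = [2da((1−by)dx + bx dy) + 2db(ay dx + (1−ax)dy)]/(1−ax−by)². Concretely, ∂²V/∂a∂x = (1−by)/(1−ax−by)², ∂²V/∂a∂y = bx/(1−ax−by)², ∂²V/∂b∂x = ay/(1−ax−by)², ∂²V/∂b∂y = (1−ax)/(1−ax−by)². -/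
/-- The para-Kähler potential `V = -log(ax+by-1)` of the dancing metric. -/
noncomputable def danceV (x y a b : ℝ) : ℝ := - Real.log (a*x + b*y - 1)

lemma inner_deriv (p q c : ℝ) (h : 0 < p*c + q - 1) :
    deriv (fun t => -Real.log (p*t + q - 1)) c = -p/(p*c + q - 1) := by
  have h1 : HasDerivAt (fun t => p*t + q - 1) p c := by
    simpa using (((hasDerivAt_id c).const_mul p).add_const q).sub_const 1
  have h2 : HasDerivAt (fun t => -Real.log (p*t + q - 1)) (-(p * (p*c+q-1)⁻¹)) c :=
    (h1.log h.ne').neg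
  rw [h2.deriv]
  field_simp

lemma outer_deriv (c1 c2 m q t : ℝ) (h : m*t + q ≠ 0) :
    HasDerivAt (fun s => -(c1*s + c2)/(m*s + q))
      ((-c1*(m*t+q) - (-(c1*t+c2))*m)/(m*t+q)^2) t := by
  have hn : HasDerivAt (fun s => -(c1*s + c2)) (-c1) t := by
    have := (((hasDerivAt_id t).const_mul c1).add_const c2).neg
    rw [mul_one] at this
    exact this
  have hd : HasDerivAt (fun s => m*s + q) m t := by
    simpa using ((hasDerivAt_id t).const_mul m).add_const q
  exact hn.div hd h

theorem dancing_paraKahler_potential (x y a b : ℝ) (h : 1 < a*x + b*y) :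
    (deriv (fun a' => deriv (fun x' => danceV x' y a' b) x) a
        = (1 - b*y)/(1 - a*x - b*y)^2)
    ∧ (deriv (fun a' => deriv (fun y' => danceV x y' a' b) y) a
        = (b*x)/(1 - a*x - b*y)^2)
    ∧ (deriv (fun b' => deriv (fun x' => danceV x' y a b') x) b
        = (a*y)/(1 - a*x - b*y)^2)
    ∧ (deriv (fun b' => deriv (fun y' => danceV x y' a b') y) b
        = (1 - a*x)/(1 - a*x - b*y)^2)
    ∧ (∀ dx dy da db : ℝ,
        2*da*((deriv (fun a' => deriv (fun x' => danceV x' y a' b) x) a)*dx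
              + (deriv (fun a' => deriv (fun y' => danceV x y' a' b) y) a)*dy)
        + 2*db*((deriv (fun b' => deriv (fun x' => danceV x' y a b') x) b)*dx
              + (deriv (fun b' => deriv (fun y' => danceV x y' a b') y) b)*dy)
        = (2*da*((1 - b*y)*dx + b*x*dy) + 2*db*(a*y*dx + (1 - a*x)*dy))
            /(1 - a*x - b*y)^2) := by
  have hs : a*x + b*y - 1 ≠ 0 := by linarith
  have hsq : (1 - a*x - b*y)^2 = (a*x + b*y - 1)^2 := by ring
  have hsA : x*a + (b*y-1) ≠ 0 := by intro hz; apply hs; linarith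
  have hsB : y*b + (a*x-1) ≠ 0 := by intro hz; apply hs; linarith
  have hevA : ∀ᶠ a' in nhds a, 1 < a'*x + b*y := by
    have hc : ContinuousAt (fun a' => a'*x + b*y) a := by fun_prop
    exact continuousAt_const.eventually_lt hc (by simpa using h)
  have hevB : ∀ᶠ b' in nhds b, 1 < a*x + b'*y := by
    have hc : ContinuousAt (fun b' => a*x + b'*y) b := by fun_prop
    exact continuousAt_const.eventually_lt hc (by simpa using h)
  have e1 : deriv (fun a' => deriv (fun x' => danceV x' y a' b) x) a
      = (1 - b*y)/(1 - a*x - b*y)^2 := by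
    have heq : (fun a' => deriv (fun x' => danceV x' y a' b) x)
        =ᶠ[nhds a] (fun a' => -(1*a' + 0)/(x*a' + (b*y - 1))) := by
      filter_upwards [hevA] with a' ha'
      have := inner_deriv a' (b*y) x (by linarith)
      simp only [danceV]
      rw [show (fun x' => -Real.log (a'*x' + b*y - 1)) = (fun t => -Real.log (a'*t + b*y - 1)) from rfl, this]
      ring_nf
    rw [heq.deriv_eq, (outer_deriv 1 0 x (b*y-1) a hsA).deriv, hsq]
    rw [div_eq_div_iff (by positivity) (by positivity)]
    ring
  have e2 : deriv (fun a' => deriv (fun y' => danceV x y' a' b) y) a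
      = (b*x)/(1 - a*x - b*y)^2 := by
    have heq : (fun a' => deriv (fun y' => danceV x y' a' b) y)
        =ᶠ[nhds a] (fun a' => -(0*a' + b)/(x*a' + (b*y - 1))) := by
      filter_upwards [hevA] with a' ha'
      have := inner_deriv b (a'*x) y (by linarith)
      simp only [danceV]
      rw [show (fun y' => -Real.log (a'*x + b*y' - 1)) = (fun t => -Real.log (b*t + a'*x - 1)) from by ext t; ring_nf, this]
      ring_nf
    rw [heq.deriv_eq, (outer_deriv 0 b x (b*y-1) a hsA).deriv, hsq]
    rw [div_eq_div_iff (by positivity) (by positivity)]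
    ring
  have e3 : deriv (fun b' => deriv (fun x' => danceV x' y a b') x) b
      = (a*y)/(1 - a*x - b*y)^2 := by
    have heq : (fun b' => deriv (fun x' => danceV x' y a b') x)
        =ᶠ[nhds b] (fun b' => -(0*b' + a)/(y*b' + (a*x - 1))) := by
      filter_upwards [hevB] with b' hb'
      have := inner_deriv a (b'*y) x (by linarith)
      simp only [danceV]
      rw [show (fun x' => -Real.log (a*x' + b'*y - 1)) = (fun t => -Real.log (a*t + b'*y - 1)) from rfl, this]
      ring_nf
    rw [heq.deriv_eq, (outer_deriv 0 a y (a*x-1) b hsB).deriv, hsq]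
    rw [div_eq_div_iff (by positivity) (by positivity)]
    ring
  have e4 : deriv (fun b' => deriv (fun y' => danceV x y' a b') y) b
      = (1 - a*x)/(1 - a*x - b*y)^2 := by
    have heq : (fun b' => deriv (fun y' => danceV x y' a b') y)
        =ᶠ[nhds b] (fun b' => -(1*b' + 0)/(y*b' + (a*x - 1))) := by
      filter_upwards [hevB] with b' hb'
      have := inner_deriv b' (a*x) y (by linarith)
      simp only [danceV]
      rw [show (fun y' => -Real.log (a*x + b'*y' - 1)) = (fun t => -Real.log (b'*t + a*x - 1)) from by ext t; ring_nf, this]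
      ring_nf
    rw [heq.deriv_eq, (outer_deriv 1 0 y (a*x-1) b hsB).deriv, hsq]
    rw [div_eq_div_iff (by positivity) (by positivity)]
    ring
  refine ⟨e1, e2, e3, e4, fun dx dy da db => ?_⟩
  rw [e1, e2, e3, e4]
  have h2 : (1 - a*x - b*y)^2 ≠ 0 := by rw [hsq]; positivity
  field_simp
end

section
/- The pullback of G = 2[⟨p,dq⟩⟨dp,q⟩ − ⟨p,q⟩⟨dp,dq⟩]/⟨p,q⟩² under the embedding ι(x,y,a,b) = ((a,b,−1),(x,y,1)) of ℝ⁴ into (ℝ³)*×ℝ³ equals the dancing metric g = [2da((1−by)dx + bx dy) + 2db(ay dx + (1−ax)dy)]/(1−ax−by)². -/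
def pair3 (p q : Fin 3 → ℝ) : ℝ := ∑ i, p i * q i

noncomputable def Gform (p q dp dq : Fin 3 → ℝ) : ℝ :=
  2 * (pair3 p dq * pair3 dp q - pair3 p q * pair3 dp dq) / (pair3 p q)^2

theorem Gform_pullback_is_dancing (x y a b dx dy da db : ℝ)
    (h : a*x + b*y ≠ 1) :
    Gform ![a, b, -1] ![x, y, 1] ![da, db, 0] ![dx, dy, 0]
      = (2*da*((1 - b*y)*dx + b*x*dy) + 2*db*(a*y*dx + (1 - a*x)*dy))
          /(1 - a*x - b*y)^2 := by
  have h2 : a*x + b*y - 1 ≠ 0 := sub_ne_zero.mpr h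
  have h3 : (1 : ℝ) - a*x - b*y ≠ 0 := by intro hh; apply h2; linarith
  simp only [Gform, pair3, Fin.sum_univ_three, Matrix.cons_val_zero,
    Matrix.cons_val_one, Matrix.head_cons, Matrix.cons_val_two, Matrix.tail_cons]
  rw [div_eq_div_iff (pow_ne_zero 2 (by intro hh; apply h2; linarith [hh] : a * x + b * y + (-1*1) ≠ 0)) (pow_ne_zero 2 h3)]
  ring
end
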